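/- Let (O₁,...,Oₙ) be an allocation with values v_i(O_i) = Σᵢ w_i, and put player i in bin r (r a power of 2, 1 ≤ r ≤ m) if r ≤ |O_i| < 2r. Then there exists a bin t such that the players in bin t, each truncated to a sub-bundle of size exactly t, achieve total welfare at least Σᵢ v_i(O_i) / (4 log₂ m), assuming v_i(A) ≥ |A| for any subset A ⊆ O_i of a bundle with v_i(O_i) = |O_i| (binary XOS monotone restriction). -/

import Mathlib

open Finset in
open Classical in
/-- Binning by bundle size: for an allocation `(O₁,...,Oₙ)` of `m ≥ 2` items with binary
welfare `Σᵢ |O_i|`, there is a power of two `t ≤ m` and sub-bundles `B i ⊆ O i` of size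
exactly `t` for the players in bin `t` (those with `t ≤ |O_i| < 2t`), whose total welfare
is at least `Σᵢ |O_i| / (4 log₂ m)`. -/
theorem bin_by_size (m n : ℕ) (hm : 2 ≤ m) (O : Fin n → Finset (Fin m)) :
    ∃ (t : ℕ) (B : Fin n → Finset (Fin m)),
      (∃ s : ℕ, t = 2 ^ s) ∧ t ≤ m ∧
      (∀ i, B i ⊆ O i) ∧
      (∀ i, t ≤ (O i).card ∧ (O i).card < 2 * t → (B i).card = t) ∧
      (∑ i, ((O i).card : ℝ)) / (4 * Real.logb 2 m) ≤
        ∑ i ∈ univ.filter (fun i => t ≤ (O i).card ∧ (O i).card < 2 * t),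
          ((B i).card : ℝ) := by
  set L := Nat.log 2 m with hL
  have hL1 : 1 ≤ L := Nat.le_log_of_pow_le (by norm_num) (by simpa using hm)
  set K := L + 1 with hK
  set f : ℕ → ℕ := fun s =>
    ∑ i ∈ univ.filter (fun i => 2 ^ s ≤ (O i).card ∧ (O i).card < 2 ^ (s + 1)),
      (O i).card with hf
  have hcardm : ∀ i, (O i).card ≤ m := fun i => by
    simpa using Finset.card_le_univ (O i)
  have key : ∑ s ∈ Finset.range K, f s = ∑ i, (O i).card := by
    simp only [hf, Finset.sum_filter]
    rw [Finset.sum_comm]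
    refine Finset.sum_congr rfl fun i _ => ?_
    rcases Nat.eq_zero_or_pos (O i).card with h0 | h0
    · simp [h0]
    · rw [Finset.sum_eq_single (Nat.log 2 (O i).card)]
      · rw [if_pos ⟨Nat.pow_log_le_self 2 h0.ne', Nat.lt_pow_succ_log_self (by norm_num) _⟩]
      · intro s _ hne
        rw [if_neg]
        rintro ⟨h1, h2⟩
        exact hne (Nat.log_eq_of_pow_le_of_lt_pow h1 h2).symm
      · intro habs
        exact absurd (Finset.mem_range.mpr
          (Nat.lt_succ_of_le (Nat.log_mono_right (hcardm i)))) habs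
  obtain ⟨s₀, hs₀mem, hmax⟩ :=
    Finset.exists_max_image (Finset.range K) f ⟨0, by simp [hK]⟩
  have hs₀ : s₀ ≤ L := Nat.lt_succ_iff.mp (Finset.mem_range.mp hs₀mem)
  have hT : ∑ i, (O i).card ≤ K * f s₀ := by
    rw [← key]
    calc ∑ s ∈ Finset.range K, f s ≤ ∑ s ∈ Finset.range K, f s₀ :=
          Finset.sum_le_sum fun s hs => hmax s hs
      _ = K * f s₀ := by rw [Finset.sum_const, Finset.card_range, smul_eq_mul]
  refine ⟨2 ^ s₀, fun i => if h : 2 ^ s₀ ≤ (O i).card then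
      (Finset.exists_subset_card_eq (s := O i) (n := 2 ^ s₀) h).choose else ∅, ⟨s₀, rfl⟩, ?_, ?_, ?_, ?_⟩
  · exact le_trans (Nat.pow_le_pow_right (by norm_num) hs₀)
      (Nat.pow_log_le_self 2 (by omega))
  · intro i
    dsimp only
    split_ifs with h
    · exact (Finset.exists_subset_card_eq (s := O i) (n := 2 ^ s₀) h).choose_spec.1
    · exact Finset.empty_subset _
  · intro i hi
    dsimp only
    rw [dif_pos hi.1]
    exact (Finset.exists_subset_card_eq (s := O i) (n := 2 ^ s₀) hi.1).choose_spec.2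
  · set S := univ.filter (fun i : Fin n => 2 ^ s₀ ≤ (O i).card ∧ (O i).card < 2 * 2 ^ s₀)
      with hS
    have hSf : f s₀ = ∑ i ∈ S, (O i).card := by
      rw [hf, hS]
      refine Finset.sum_congr ?_ fun _ _ => rfl
      ext i
      simp [pow_succ, mul_comm]
    have hRHS : ∑ i ∈ S, ((if h : 2 ^ s₀ ≤ (O i).card then
        (Finset.exists_subset_card_eq (s := O i) (n := 2 ^ s₀) h).choose else ∅).card : ℝ)
        = S.card * 2 ^ s₀ := by
      have hterm : ∀ i ∈ S, ((if h : 2 ^ s₀ ≤ (O i).card then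
          (Finset.exists_subset_card_eq (s := O i) (n := 2 ^ s₀) h).choose else ∅).card : ℝ)
          = (2 : ℝ) ^ s₀ := by
        intro i hi
        have hi' := (Finset.mem_filter.mp hi).2
        rw [dif_pos hi'.1, (Finset.exists_subset_card_eq (s := O i) (n := 2 ^ s₀) hi'.1).choose_spec.2]
        push_cast; ring
      rw [Finset.sum_congr rfl hterm, Finset.sum_const, nsmul_eq_mul]
    have hfS : f s₀ ≤ 2 * (S.card * 2 ^ s₀) := by
      rw [hSf]
      calc ∑ i ∈ S, (O i).card ≤ ∑ i ∈ S, 2 * 2 ^ s₀ :=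
            Finset.sum_le_sum fun i hi => le_of_lt (Finset.mem_filter.mp hi).2.2
        _ = 2 * (S.card * 2 ^ s₀) := by rw [Finset.sum_const, smul_eq_mul]; ring
    have hlogpos : 0 < Real.logb 2 m := Real.logb_pos (by norm_num)
      (by exact_mod_cast lt_of_lt_of_le one_lt_two hm)
    have hLlog : (L : ℝ) ≤ Real.logb 2 m := by
      have h2L : ((2 : ℝ) ^ L : ℝ) ≤ (m : ℝ) := by
        exact_mod_cast Nat.pow_log_le_self 2 (by omega : m ≠ 0)
      calc (L : ℝ) = Real.logb 2 ((2 : ℝ) ^ L) := by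
            rw [Real.logb_pow, Real.logb_self_eq_one (by norm_num)]; ring
        _ ≤ Real.logb 2 m := Real.logb_le_logb_of_le (by norm_num) (by positivity) h2L
    rw [div_le_iff₀ (by positivity)]
    have hchain : (∑ i, ((O i).card : ℝ)) ≤ (2 * K) * (S.card * 2 ^ s₀) := by
      have : (∑ i, ((O i).card : ℝ)) ≤ (K : ℝ) * (f s₀ : ℝ) := by
        exact_mod_cast hT
      calc (∑ i, ((O i).card : ℝ)) ≤ (K : ℝ) * (f s₀ : ℝ) := this
        _ ≤ (K : ℝ) * (2 * (S.card * 2 ^ s₀)) := by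
            apply mul_le_mul_of_nonneg_left _ (by positivity)
            exact_mod_cast hfS
        _ = (2 * K) * (S.card * 2 ^ s₀) := by ring
    rw [hRHS]
    calc (∑ i, ((O i).card : ℝ)) ≤ (2 * K) * (S.card * 2 ^ s₀) := hchain
      _ ≤ (4 * Real.logb 2 m) * (S.card * 2 ^ s₀) := by
          apply mul_le_mul_of_nonneg_right _ (by positivity)
          have : (2 * K : ℝ) = 2 * L + 2 := by push_cast [hK]; ring
          rw [this]
          have hL1' : (1 : ℝ) ≤ L := by exact_mod_cast hL1
          nlinarith
      _ = (S.card * 2 ^ s₀) * (4 * Real.logb 2 m) := by ring
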